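/- arXiv:1902.05454 — 2 statements merged into one kernel-verified Lean document; each statement's English description precedes it below -/
import Mathlib

section
/- If x₁,…,xₙ are independent samples from a distribution with CDF F and G is their empirical CDF, then for any 0 ≤ b ≤ 1 and 0 ≤ ε ≤ 1/2, the probability that there exists x ≥ 0 with 1 − G(x) ≥ b and (1 − G(x))/(1+ε) > 1 − F(x) is at most exp(−ε²nb/4). -/
open MeasureTheory

/-- Key analytic inequality: for `0 ≤ e ≤ 1/2`, `e²/4 ≤ 1/(1+e) + log(1+e) − 1`. -/
lemma key_wellner_ineq {e : ℝ} (h0 : 0 ≤ e) (h2 : e ≤ 1/2) :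
    e ^ 2 / 4 ≤ 1 / (1 + e) + Real.log (1 + e) - 1 := by
  have h1 : |(-e)| < 1 := by rw [abs_neg, abs_of_nonneg h0]; linarith
  have hb := Real.abs_log_sub_add_sum_range_le h1 8
  rw [abs_neg, abs_of_nonneg h0] at hb
  have hsum : (∑ i ∈ Finset.range 8, (-e) ^ (i + 1) / (i + 1)) =
      -e + e^2/2 - e^3/3 + e^4/4 - e^5/5 + e^6/6 - e^7/7 + e^8/8 := by
    simp [Finset.sum_range_succ]; ring
  rw [hsum, show (1 : ℝ) - -e = 1 + e by ring] at hb
  have hab := abs_le.1 hb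
  have hpos : (0:ℝ) < 1 + e := by linarith
  have hpos2 : (0:ℝ) < 1 - e := by linarith
  have hr : e^9/(1-e) ≤ 2 * e^9 := by
    rw [div_le_iff₀ hpos2]; nlinarith [pow_nonneg h0 9, pow_nonneg h0 10]
  have hlog : Real.log (1 + e) ≥
      e - e^2/2 + e^3/3 - e^4/4 + e^5/5 - e^6/6 + e^7/7 - e^8/8 - 2 * e^9 := by
    have h := hab.1
    norm_num at h
    linarith
  have hppow : ∀ k : ℕ, e ^ (k + 2) ≤ e^2 * (1/2)^k := by
    intro k
    calc e ^ (k+2) = e^2 * e^k := by ring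
    _ ≤ e^2 * (1/2)^k :=
        mul_le_mul_of_nonneg_left (pow_le_pow_left₀ h0 h2 k) (sq_nonneg e)
  have h3 := hppow 1; have h5 := hppow 3; have h7 := hppow 5
  have h9 := hppow 7; have h10 := hppow 8
  norm_num at h3 h5 h7 h9 h10
  have hQ : 0 ≤ e^2/4 - 5*e^3/12 + e^4/12 - e^5/20 + e^6/30 - e^7/42 + e^8/56
      - 17*e^9/8 - 2*e^10 := by
    nlinarith [pow_nonneg h0 4, pow_nonneg h0 6, pow_nonneg h0 8, sq_nonneg e]
  have hid : 1/(1+e) + (e - e^2/2 + e^3/3 - e^4/4 + e^5/5 - e^6/6 + e^7/7 - e^8/8 - 2*e^9)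
      - 1 - e^2/4
      = (e^2/4 - 5*e^3/12 + e^4/12 - e^5/20 + e^6/30 - e^7/42 + e^8/56
      - 17*e^9/8 - 2*e^10) / (1 + e) := by
    field_simp
    ring
  have := div_nonneg hQ hpos.le
  linarith [hid ▸ this, hlog]

/-- Lemma 1 (Wellner-type bound): let `x₁,…,xₙ` be i.i.d. samples from a distribution with CDF
`F`, and `G` their empirical CDF. Assuming Wellner's inequality (with `f(x) = x + ln(1/x) − 1`,
so that `f(1/λ) = 1/λ + ln λ − 1`), for any `0 ≤ b ≤ 1` and `0 ≤ ε ≤ 1/2` the probability that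
some `x ≥ 0` satisfies both `1 − G(x) ≥ b` and `(1 − G(x))/(1+ε) > 1 − F(x)` is at most
`exp(−ε²nb/4)`. -/
theorem stmt1 {Ω : Type*} [MeasurableSpace Ω] (μ : Measure Ω) [IsProbabilityMeasure μ]
    (n : ℕ) (hn : 1 ≤ n) (X : Fin n → Ω → ℝ)
    (hmeas : ∀ i, Measurable (X i))
    (hindep : ProbabilityTheory.iIndepFun X μ)
    (F : ℝ → ℝ) (hF : ∀ i x, (μ {ω | X i ω ≤ x}).toReal = F x)
    (G : Ω → ℝ → ℝ)
    (hG : ∀ ω x, G ω x = ((Finset.univ.filter (fun i => X i ω ≤ x)).card : ℝ) / n)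
    (b ε : ℝ) (hb0 : 0 ≤ b) (hb1 : b ≤ 1) (hε0 : 0 ≤ ε) (hε2 : ε ≤ 1/2)
    (wellner : ∀ lam : ℝ, 1 ≤ lam →
      μ {ω | ∃ x, 0 ≤ x ∧ b ≤ 1 - G ω x ∧ lam * (1 - F x) < 1 - G ω x}
        ≤ ENNReal.ofReal (Real.exp (-(n * b * (1 / lam + Real.log lam - 1))))) :
    μ {ω | ∃ x, 0 ≤ x ∧ b ≤ 1 - G ω x ∧ (1 - G ω x) / (1 + ε) > 1 - F x}
      ≤ ENNReal.ofReal (Real.exp (-(ε ^ 2 * n * b) / 4)) := by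
  have hεpos : (0:ℝ) < 1 + ε := by linarith
  have hset : {ω | ∃ x, 0 ≤ x ∧ b ≤ 1 - G ω x ∧ (1 - G ω x) / (1 + ε) > 1 - F x}
      = {ω | ∃ x, 0 ≤ x ∧ b ≤ 1 - G ω x ∧ (1 + ε) * (1 - F x) < 1 - G ω x} := by
    ext ω
    simp only [Set.mem_setOf_eq, gt_iff_lt]
    refine exists_congr fun x => and_congr_right fun _ => and_congr_right fun _ => ?_
    rw [lt_div_iff₀ hεpos, mul_comm]
  rw [hset]
  refine (wellner (1 + ε) (by linarith)).trans ?_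
  apply ENNReal.ofReal_le_ofReal
  apply Real.exp_le_exp.2
  have hk := key_wellner_ineq hε0 hε2
  have hnb : (0:ℝ) ≤ (n : ℝ) * b := by positivity
  have := mul_le_mul_of_nonneg_left hk hnb
  nlinarith [this]
end

section
/- If configuration i is (ε,δ)-suboptimal, then there exists a timeout threshold φ such that R_φ(i) > (1+ε)·R(i*) and Pr_{j∼Γ}(R(i,j) > φ) ≥ δ, where i* is the configuration minimizing uncapped expected runtime. -/
open MeasureTheory

/-- Claim 1 (claim:subopt): if configuration `i` is `(ε,δ)`-suboptimal (i.e. for every timeout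
`θ` with `Pr_j(R(i,j) > θ) ≤ δ` we have `R_θ(i) > (1+ε)·R(i*)`, where `i*` minimizes uncapped
expected runtime with value `OPT`), and `θ ↦ R_θ(i)` is continuous, then there is a timeout `φ`
with `R_φ(i) > (1+ε)·OPT` and `Pr_j(R(i,j) > φ) ≥ δ`. -/
theorem stmt7 {J : Type*} [MeasurableSpace J] (Γ : Measure J) [IsProbabilityMeasure Γ]
    (R : J → ℝ) (κ₀ : ℝ) (hκ : 0 < κ₀) (hRκ : ∀ j, κ₀ ≤ R j)
    (ε δ OPT : ℝ) (hε : 0 < ε) (hδ0 : 0 < δ) (hδ1 : δ < 1)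
    (Rcap : ℝ → ℝ) (hRcap : ∀ θ, Rcap θ = ∫ j, min (R j) θ ∂Γ)
    (hcont : Continuous Rcap)
    (hne : ∃ θ, (Γ {j | R j > θ}).toReal ≤ δ)
    (hsub : ∀ θ, (Γ {j | R j > θ}).toReal ≤ δ → (1 + ε) * OPT < Rcap θ) :
    ∃ φ, (1 + ε) * OPT < Rcap φ ∧ δ ≤ (Γ {j | R j > φ}).toReal := by
  classical
  set S : Set ℝ := {θ | (Γ {j | R j > θ}).toReal ≤ δ} with hS
  have hSne : S.Nonempty := hne
  have hSlb : ∀ θ ∈ S, κ₀ ≤ θ := by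
    intro θ hθ
    by_contra h
    push_neg at h
    have huniv : {j | R j > θ} = Set.univ := by
      ext j; simp only [Set.mem_setOf_eq, Set.mem_univ, iff_true]
      exact lt_of_lt_of_le h (hRκ j)
    have : (Γ {j | R j > θ}).toReal = 1 := by
      rw [huniv, measure_univ]; simp
    have hθ' : (Γ {j | R j > θ}).toReal ≤ δ := hθ
    rw [this] at hθ'
    linarith
  have hbdd : BddBelow S := ⟨κ₀, hSlb⟩
  set φ₀ : ℝ := sInf S with hφ₀
  -- φ₀ ∈ S, via continuity from below of the measure
  have hφ₀S : φ₀ ∈ S := by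
    -- choose θ n ∈ S with θ n < φ₀ + 1/(n+1)
    have hchoice : ∀ n : ℕ, ∃ θ ∈ S, θ < φ₀ + 1 / (n + 1 : ℝ) := by
      intro n
      have hpos : (0:ℝ) < 1 / (n + 1 : ℝ) := by positivity
      have : sInf S < φ₀ + 1 / (n + 1 : ℝ) := by
        rw [← hφ₀]; linarith
      exact exists_lt_of_csInf_lt hSne this
    choose θ hθS hθlt using hchoice
    have hsubset : {j | R j > φ₀} = ⋃ n : ℕ, {j | R j > φ₀ + 1 / (n + 1 : ℝ)} := by
      ext j
      simp only [Set.mem_setOf_eq, Set.mem_iUnion]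
      constructor
      · intro h
        obtain ⟨n, hn⟩ := exists_nat_one_div_lt (sub_pos.mpr h)
        exact ⟨n, by linarith⟩
      · rintro ⟨n, hn⟩
        have hpos : (0:ℝ) < 1 / (n + 1 : ℝ) := by positivity
        linarith
    have hdir : Directed (· ⊆ ·) (fun n : ℕ => {j | R j > φ₀ + 1 / (n + 1 : ℝ)}) := by
      intro m n
      rcases le_total (1 / (m + 1 : ℝ)) (1 / (n + 1 : ℝ)) with h | h
      · refine ⟨m, subset_rfl, fun j hj => ?_⟩
        simp only [Set.mem_setOf_eq] at hj ⊢
        linarith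
      · refine ⟨n, fun j hj => ?_, subset_rfl⟩
        simp only [Set.mem_setOf_eq] at hj ⊢
        linarith
    have hmeas : Γ {j | R j > φ₀} ≤ ENNReal.ofReal δ := by
      rw [hsubset, Directed.measure_iUnion hdir]
      refine iSup_le fun n => ?_
      have hsub' : {j | R j > φ₀ + 1 / (n + 1 : ℝ)} ⊆ {j | R j > θ n} := by
        intro j hj
        have hle : θ n ≤ φ₀ + 1 / (n + 1 : ℝ) := (hθlt n).le
        exact lt_of_le_of_lt hle hj
      refine le_trans (measure_mono hsub') ?_
      exact (ENNReal.le_ofReal_iff_toReal_le (measure_ne_top Γ _) hδ0.le).mpr (hθS n)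
    exact ENNReal.toReal_le_of_le_ofReal hδ0.le hmeas
  have h1 : (1 + ε) * OPT < Rcap φ₀ := hsub φ₀ hφ₀S
  -- the set where Rcap exceeds the bound is open
  have hopen : IsOpen {x : ℝ | (1 + ε) * OPT < Rcap x} := isOpen_lt continuous_const hcont
  obtain ⟨η, hη, hball⟩ := Metric.isOpen_iff.mp hopen φ₀ h1
  refine ⟨φ₀ - η / 2, ?_, ?_⟩
  · apply hball
    simp only [Metric.mem_ball, Real.dist_eq]
    rw [abs_of_nonpos (by linarith)]
    linarith
  · by_contra h
    push_neg at h
    have hmem : φ₀ - η / 2 ∈ S := h.le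
    have : φ₀ ≤ φ₀ - η / 2 := csInf_le hbdd hmem
    linarith
end
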